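/- Let C(m, n) = ∑_{d ∣ gcd(m, n)} d·μ(n/d) denote Ramanujan's sum, where μ is the arithmetic Möbius function. Then for all m, n ∈ ℤ₊, (C *₂ μ₂)(m, n) = m·(μ * μ)(n/m) if m ∣ n, and (C *₂ μ₂)(m, n) = 0 if m ∤ n, where *₂ is the bivariate Dirichlet convolution, μ₂(m, n) = μ(m)μ(n), and * is the univariate Dirichlet convolution. -/

import Mathlib

/-- The arithmetic Möbius function, real valued. -/
noncomputable def muR (n : ℕ) : ℝ := ((ArithmeticFunction.moebius n : ℤ) : ℝ)

/-- The univariate Dirichlet convolution `(g * h)(n) = ∑_{k ∣ n} g(k) h(n/k)`. -/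
noncomputable def dirichletConv1 (g h : ℕ → ℝ) : ℕ → ℝ :=
  fun n => ∑ k ∈ n.divisors, g k * h (n / k)

/-- The bivariate Dirichlet convolution
`(f *₂ g)(i₁, i₂) = ∑_{k₁ ∣ i₁, k₂ ∣ i₂} f(k₁, k₂) g(i₁/k₁, i₂/k₂)`. -/
noncomputable def dirichletConv2 (f g : ℕ → ℕ → ℝ) : ℕ → ℕ → ℝ :=
  fun i₁ i₂ => ∑ k₁ ∈ i₁.divisors, ∑ k₂ ∈ i₂.divisors, f k₁ k₂ * g (i₁ / k₁) (i₂ / k₂)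

/-- Ramanujan's sum `C(m, n) = ∑_{d ∣ gcd(m, n)} d·μ(n/d)`. -/
noncomputable def ramanujanC (m n : ℕ) : ℝ :=
  ∑ d ∈ (Nat.gcd m n).divisors, (d : ℝ) * muR (n / d)

open ArithmeticFunction in
lemma lemA (n : ℕ) (hn : 0 < n) (m : ℕ) (hm : 0 < m) :
    ∑ k ∈ m.divisors, ramanujanC k n * muR (m / k)
      = if m ∣ n then (m : ℝ) * muR (n / m) else 0 := by
  have key := (sum_eq_iff_sum_mul_moebius_eq (R := ℝ)
    (f := fun d => if d ∣ n then (d : ℝ) * muR (n / d) else 0)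
    (g := fun k => ramanujanC k n)).mp ?_ m hm
  · rw [← key, Nat.sum_divisorsAntidiagonal' (f := fun a b => (ArithmeticFunction.moebius a : ℝ) * ramanujanC b n)]
    exact Finset.sum_congr rfl fun k hk => by rw [mul_comm]; rfl
  · intro k hk
    have hgd : Nat.gcd k n ∣ k := Nat.gcd_dvd_left k n
    have hdf : {d ∈ k.divisors | d ∣ Nat.gcd k n} = (Nat.gcd k n).divisors :=
      Nat.divisors_filter_dvd_of_dvd hk.ne' hgd
    rw [← Finset.sum_filter, show Finset.filter (fun d => d ∣ n) k.divisors
        = Finset.filter (fun d => d ∣ Nat.gcd k n) k.divisors from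
      Finset.filter_congr (fun d hd => by
        simp only [Nat.mem_divisors] at hd
        simp [Nat.dvd_gcd_iff, hd.1]), hdf]
    rfl

/-- For all positive integers `m, n`:
`(C *₂ μ₂)(m, n) = m·(μ * μ)(n/m)` if `m ∣ n`, and `(C *₂ μ₂)(m, n) = 0` otherwise,
where `μ₂(m, n) = μ(m)μ(n)`. -/
theorem ramanujan_conv_mu2 (m n : ℕ) (hm : 0 < m) (hn : 0 < n) :
    dirichletConv2 ramanujanC (fun a b => muR a * muR b) m n
      = if m ∣ n then (m : ℝ) * dirichletConv1 muR muR (n / m) else 0 := by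
  unfold dirichletConv2
  rw [Finset.sum_comm]
  have step : ∀ k₂ ∈ n.divisors,
      (∑ k₁ ∈ m.divisors, ramanujanC k₁ k₂ * (muR (m / k₁) * muR (n / k₂)))
        = (if m ∣ k₂ then (m : ℝ) * muR (k₂ / m) else 0) * muR (n / k₂) := by
    intro k₂ hk₂
    rw [← lemA k₂ (Nat.pos_of_mem_divisors hk₂) m hm, Finset.sum_mul]
    exact Finset.sum_congr rfl fun k₁ _ => by ring
  rw [Finset.sum_congr rfl step]
  by_cases hmn : m ∣ n
  · rw [if_pos hmn]
    rw [dirichletConv1, Finset.mul_sum]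
    rw [← Finset.sum_filter_of_ne (f := fun k₂ => (if m ∣ k₂ then (m : ℝ) * muR (k₂ / m) else 0) * muR (n / k₂)) (p := fun k₂ => m ∣ k₂) (fun x hx h => by
      by_contra hc
      exact h (by simp [hc]))]
    have hnm0 : 0 < n / m := Nat.div_pos (Nat.le_of_dvd hn hmn) hm
    refine (Finset.sum_nbij' (fun j => m * j) (fun k => k / m) ?_ ?_ ?_ ?_ ?_).symm
    · intro j hj
      simp only [Nat.mem_divisors] at hj
      simp only [Finset.mem_filter, Nat.mem_divisors]
      obtain ⟨c, hc⟩ := hj.1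
      refine ⟨⟨⟨c, ?_⟩, hn.ne'⟩, Dvd.intro j rfl⟩
      rw [← Nat.div_mul_cancel hmn, hc]; ring
    · intro a ha
      simp only [Finset.mem_filter, Nat.mem_divisors] at ha
      obtain ⟨j, rfl⟩ := ha.2
      simp only [Nat.mem_divisors]
      rw [Nat.mul_div_cancel_left j hm]
      refine ⟨?_, hnm0.ne'⟩
      have h1 := ha.1.1
      rw [← Nat.div_mul_cancel hmn, mul_comm (n / m) m] at h1
      exact (mul_dvd_mul_iff_left (a := m) hm.ne').mp h1
    · intro j _
      exact Nat.mul_div_cancel_left j hm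
    · intro a ha
      simp only [Finset.mem_filter] at ha
      exact Nat.mul_div_cancel' ha.2
    · intro j _
      have h2 : m ∣ m * j := Dvd.intro j rfl
      simp only [if_pos h2, Nat.mul_div_cancel_left j hm,
        (Nat.div_div_eq_div_mul n m j).symm]
      ring
  · rw [if_neg hmn]
    refine Finset.sum_eq_zero fun k₂ hk₂ => ?_
    have : ¬ m ∣ k₂ := fun h => hmn (h.trans (Nat.dvd_of_mem_divisors hk₂))
    rw [if_neg this, zero_mul]
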